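/- Let ν = N(θ, Σ) on R^n with Σ positive definite, let v_1 be a unit eigenvector of Σ for its largest eigenvalue, and let E = {x : v_1^T x + b ≤ 0}. Then for every ε ≥ 0, ν(E_ε^{(ℓ_2)}) = Φ(Φ^{-1}(ν(E)) + ε/||Σ^{1/2}||_2), i.e., the lower bound of the generalized Gaussian isoperimetric inequality with p = 2 is attained with equality. -/

import Mathlib

open MeasureTheory ProbabilityTheory Matrix

noncomputable def lpNorm {n : ℕ} (p : ℝ) (x : Fin n → ℝ) : ℝ :=
  (∑ i, |x i| ^ p) ^ (1 / p)

def expand {n : ℕ} (p η : ℝ) (E : Set (Fin n → ℝ)) : Set (Fin n → ℝ) :=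
  {x | ∃ x' ∈ E, lpNorm p (x' - x) ≤ η}

noncomputable def stdGaussian (n : ℕ) : Measure (Fin n → ℝ) :=
  Measure.pi fun _ => gaussianReal 0 1

noncomputable def Phi (t : ℝ) : ℝ := ((gaussianReal 0 1) (Set.Iic t)).toReal

noncomputable def PhiInv : ℝ → ℝ := Function.invFun Phi

noncomputable def matLpNorm {n : ℕ} (p : ℝ) (M : Matrix (Fin n) (Fin n) ℝ) : ℝ :=
  ⨆ v ∈ {v : Fin n → ℝ | v ≠ 0}, lpNorm p (M.mulVec v) / lpNorm p v


open Real NNReal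

lemma lpNorm_two {n : ℕ} (x : Fin n → ℝ) : lpNorm 2 x = Real.sqrt (∑ i, x i ^ 2) := by
  unfold _root_.lpNorm
  rw [Real.sqrt_eq_rpow]
  congr 1
  refine Finset.sum_congr rfl fun i _ => ?_
  rw [show (2:ℝ) = ((2:ℕ):ℝ) by norm_num, Real.rpow_natCast, sq_abs]

lemma lpNorm_nonneg {n : ℕ} (x : Fin n → ℝ) : 0 ≤ lpNorm 2 x := by
  rw [lpNorm_two]; exact Real.sqrt_nonneg _

lemma lpNorm_smul {n : ℕ} (c : ℝ) (x : Fin n → ℝ) : lpNorm 2 (c • x) = |c| * lpNorm 2 x := by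
  rw [lpNorm_two, lpNorm_two]
  rw [show ∑ i, (c • x) i ^ 2 = c^2 * ∑ i, x i ^2 by
    rw [Finset.mul_sum]; exact Finset.sum_congr rfl fun i _ => by simp [mul_pow]]
  rw [Real.sqrt_mul (sq_nonneg c), Real.sqrt_sq_eq_abs]

lemma dot_le_lpNorm {n : ℕ} (w z : Fin n → ℝ) : w ⬝ᵥ z ≤ lpNorm 2 w * lpNorm 2 z := by
  rw [lpNorm_two, lpNorm_two]
  exact Real.sum_mul_le_sqrt_mul_sqrt _ w z

lemma sum_sq_eq_one {n : ℕ} {x : Fin n → ℝ} (h : lpNorm 2 x = 1) : ∑ i, x i ^ 2 = 1 := by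
  rw [lpNorm_two] at h
  nlinarith [Real.sq_sqrt (show (0:ℝ) ≤ ∑ i, x i ^2 by positivity), h]

lemma dot_self_eq {n : ℕ} (x : Fin n → ℝ) : x ⬝ᵥ x = ∑ i, x i ^ 2 := by
  simp [dotProduct, sq]

lemma lpNorm_pos {n : ℕ} {x : Fin n → ℝ} (hx : x ≠ 0) : 0 < lpNorm 2 x := by
  rw [lpNorm_two]
  apply Real.sqrt_pos.2
  rcases Function.ne_iff.1 hx with ⟨i, hi⟩
  calc (0:ℝ) < x i ^ 2 := by have : x i ≠ 0 := hi; positivity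
  _ ≤ _ := Finset.single_le_sum (f := fun i => x i ^2) (fun j _ => sq_nonneg _) (Finset.mem_univ i)

/-- expansion of the half space -/
lemma expand_halfspace {n : ℕ} (v₁ : Fin n → ℝ) (hv₁ : lpNorm 2 v₁ = 1) (b ε : ℝ) (hε : 0 ≤ ε) :
    expand 2 ε {x : Fin n → ℝ | v₁ ⬝ᵥ x + b ≤ 0} = {x : Fin n → ℝ | v₁ ⬝ᵥ x + b ≤ ε} := by
  ext x
  constructor
  · rintro ⟨x', hx', hd⟩
    have h1 : v₁ ⬝ᵥ x - v₁ ⬝ᵥ x' ≤ ε := by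
      have : v₁ ⬝ᵥ (x - x') ≤ lpNorm 2 v₁ * lpNorm 2 (x - x') := dot_le_lpNorm _ _
      have hxx : lpNorm 2 (x - x') = lpNorm 2 (x' - x) := by
        rw [show x - x' = (-1 : ℝ) • (x' - x) by module, lpNorm_smul]; norm_num
      rw [hv₁, one_mul, hxx] at this
      calc v₁ ⬝ᵥ x - v₁ ⬝ᵥ x' = v₁ ⬝ᵥ (x - x') := by rw [dotProduct_sub]
        _ ≤ lpNorm 2 (x' - x) := this
        _ ≤ ε := hd
    have h2 : v₁ ⬝ᵥ x' + b ≤ 0 := hx'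
    simp only [Set.mem_setOf_eq]; linarith
  · intro hx
    simp only [Set.mem_setOf_eq] at hx
    set t := max 0 (v₁ ⬝ᵥ x + b) with ht
    refine ⟨x - t • v₁, ?_, ?_⟩
    · have hvv : v₁ ⬝ᵥ v₁ = 1 := by rw [dot_self_eq]; exact sum_sq_eq_one hv₁
      simp only [Set.mem_setOf_eq, dotProduct_sub, dotProduct_smul, smul_eq_mul, hvv, mul_one]
      rcases le_or_gt (v₁ ⬝ᵥ x + b) 0 with h | h
      · rw [ht, max_eq_left h]; linarith
      · rw [ht, max_eq_right h.le]; linarith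
    · have : x - t • v₁ - x = (-t) • v₁ := by module
      rw [this, lpNorm_smul, hv₁, mul_one, abs_neg, abs_of_nonneg (le_max_left _ _)]
      exact max_le hε hx

lemma pdf_conv_ident (a b : ℝ≥0) (ha : a ≠ 0) (hb : b ≠ 0) (z x : ℝ) :
    gaussianPDFReal 0 a x * gaussianPDFReal 0 b (z - x) =
      gaussianPDFReal 0 (a + b) z * gaussianPDFReal ((a : ℝ) * z / (a + b)) (a * b / (a + b)) x := by
  have ha' : (0:ℝ) < a := lt_of_le_of_ne a.coe_nonneg (by exact_mod_cast (Ne.symm ha))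
  have hb' : (0:ℝ) < b := lt_of_le_of_ne b.coe_nonneg (by exact_mod_cast (Ne.symm hb))
  have hab : (0:ℝ) < (a:ℝ) + b := by linarith
  unfold gaussianPDFReal
  have hcoe1 : ((a + b : ℝ≥0) : ℝ) = (a:ℝ) + b := by push_cast; ring
  have hcoe2 : ((a * b / (a + b) : ℝ≥0) : ℝ) = (a:ℝ) * b / ((a:ℝ) + b) := by push_cast; ring
  rw [hcoe1, hcoe2]
  have hconst : (√(2 * π * a))⁻¹ * (√(2 * π * b))⁻¹ =
      (√(2 * π * ((a:ℝ) + b)))⁻¹ * (√(2 * π * ((a:ℝ) * b / ((a:ℝ) + b))))⁻¹ := by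
    rw [← mul_inv, ← mul_inv, ← Real.sqrt_mul (by positivity), ← Real.sqrt_mul (by positivity)]
    congr 2
    field_simp
  have hexp : rexp (-(x - 0) ^ 2 / (2 * a)) * rexp (-(z - x - 0) ^ 2 / (2 * b)) =
      rexp (-(z - 0) ^ 2 / (2 * ((a:ℝ) + b))) *
        rexp (-(x - (a:ℝ) * z / ((a:ℝ) + b)) ^ 2 / (2 * ((a:ℝ) * b / ((a:ℝ) + b)))) := by
    rw [← Real.exp_add, ← Real.exp_add]
    congr 1
    field_simp
    ring
  calc (√(2 * π * a))⁻¹ * rexp (-(x - 0) ^ 2 / (2 * a)) *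
        ((√(2 * π * b))⁻¹ * rexp (-(z - x - 0) ^ 2 / (2 * b)))
      = ((√(2 * π * a))⁻¹ * (√(2 * π * b))⁻¹) *
        (rexp (-(x - 0) ^ 2 / (2 * a)) * rexp (-(z - x - 0) ^ 2 / (2 * b))) := by ring
    _ = _ := by rw [hconst, hexp]; ring

lemma integral_pdf_conv (a b : ℝ≥0) (ha : a ≠ 0) (hb : b ≠ 0) (z : ℝ) :
    ∫ x, gaussianPDFReal 0 a x * gaussianPDFReal 0 b (z - x) = gaussianPDFReal 0 (a + b) z := by
  have hab : a * b / (a + b) ≠ 0 := by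
    have : a + b ≠ 0 := by simp [ha]
    exact div_ne_zero (mul_ne_zero ha hb) this
  calc ∫ x, gaussianPDFReal 0 a x * gaussianPDFReal 0 b (z - x)
      = ∫ x, gaussianPDFReal 0 (a + b) z *
          gaussianPDFReal ((a : ℝ) * z / (a + b)) (a * b / (a + b)) x := by
        refine integral_congr_ae (Filter.Eventually.of_forall fun x => ?_)
        exact pdf_conv_ident a b ha hb z x
    _ = gaussianPDFReal 0 (a + b) z *
          ∫ x, gaussianPDFReal ((a : ℝ) * z / (a + b)) (a * b / (a + b)) x :=
        integral_const_mul _ _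
    _ = gaussianPDFReal 0 (a + b) z := by
        rw [integral_gaussianPDFReal_eq_one _ hab, mul_one]

lemma integrable_pdf_conv (a b : ℝ≥0) (ha : a ≠ 0) (hb : b ≠ 0) (z : ℝ) :
    Integrable (fun x => gaussianPDFReal 0 a x * gaussianPDFReal 0 b (z - x)) := by
  have : (fun x => gaussianPDFReal 0 a x * gaussianPDFReal 0 b (z - x)) =
      fun x => gaussianPDFReal 0 (a + b) z *
        gaussianPDFReal ((a : ℝ) * z / (a + b)) (a * b / (a + b)) x := by
    funext x; exact pdf_conv_ident a b ha hb z x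
  rw [this]
  exact (integrable_gaussianPDFReal _ _).const_mul _

lemma lintegral_pdf_conv (a b : ℝ≥0) (ha : a ≠ 0) (hb : b ≠ 0) (z : ℝ) :
    ∫⁻ x, gaussianPDF 0 a x * gaussianPDF 0 b (z - x) = gaussianPDF 0 (a + b) z := by
  unfold gaussianPDF
  calc ∫⁻ x, ENNReal.ofReal (gaussianPDFReal 0 a x) * ENNReal.ofReal (gaussianPDFReal 0 b (z - x))
      = ∫⁻ x, ENNReal.ofReal (gaussianPDFReal 0 a x * gaussianPDFReal 0 b (z - x)) := by
        refine lintegral_congr fun x => ?_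
        rw [ENNReal.ofReal_mul (gaussianPDFReal_nonneg _ _ _)]
    _ = ENNReal.ofReal (∫ x, gaussianPDFReal 0 a x * gaussianPDFReal 0 b (z - x)) := by
        rw [← ofReal_integral_eq_lintegral_ofReal (integrable_pdf_conv a b ha hb z)
          (Filter.Eventually.of_forall fun x =>
            mul_nonneg (gaussianPDFReal_nonneg _ _ _) (gaussianPDFReal_nonneg _ _ _))]
    _ = _ := by rw [integral_pdf_conv a b ha hb z]

lemma gaussian_conv (a b : ℝ≥0) :
    Measure.map (fun p : ℝ × ℝ => p.1 + p.2) ((gaussianReal 0 a).prod (gaussianReal 0 b)) =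
      gaussianReal 0 (a + b) := by
  by_cases ha : a = 0
  · subst ha
    rw [gaussianReal_zero_var, Measure.dirac_prod, Measure.map_map (by fun_prop) (by fun_prop)]
    simp only [Function.comp_def, zero_add]
    rw [Measure.map_id']
  by_cases hb : b = 0
  · subst hb
    rw [gaussianReal_zero_var, Measure.prod_dirac, Measure.map_map (by fun_prop) (by fun_prop)]
    simp only [Function.comp_def, add_zero]
    rw [Measure.map_id']
  have hab : a + b ≠ 0 := by simp [ha]
  ext s hs
  rw [Measure.map_apply (by fun_prop) hs]
  rw [Measure.prod_apply (hs.preimage (by fun_prop))]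
  have hre : ∀ x : ℝ, (gaussianReal 0 b) (Prod.mk x ⁻¹' ((fun p : ℝ × ℝ => p.1 + p.2) ⁻¹' s)) =
      ∫⁻ z in s, gaussianPDF 0 b (z - x) := by
    intro x
    have hset : (Prod.mk x ⁻¹' ((fun p : ℝ × ℝ => p.1 + p.2) ⁻¹' s)) =
        (fun y : ℝ => x + y) ⁻¹' s := rfl
    have hms : MeasurableSet ((fun y : ℝ => x + y) ⁻¹' s) :=
      hs.preimage (by fun_prop)
    rw [hset, gaussianReal_of_var_ne_zero 0 hb, withDensity_apply _ hms]
    rw [← lintegral_indicator hms _, ← lintegral_indicator hs _]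
    rw [show ∫⁻ y, Set.indicator ((fun y : ℝ => x + y) ⁻¹' s) (gaussianPDF 0 b) y
        = ∫⁻ y, Set.indicator s (fun z => gaussianPDF 0 b (z - x)) (x + y) from
      lintegral_congr fun y => by
        by_cases hy : x + y ∈ s
        · simp [Set.indicator_of_mem, hy, Set.mem_preimage]
        · simp [Set.indicator_of_notMem, hy, Set.mem_preimage]]
    exact lintegral_add_left_eq_self (fun z => Set.indicator s (fun z => gaussianPDF 0 b (z - x)) z) x
  calc ∫⁻ x, (gaussianReal 0 b) (Prod.mk x ⁻¹' ((fun p : ℝ × ℝ => p.1 + p.2) ⁻¹' s))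
        ∂(gaussianReal 0 a)
      = ∫⁻ x, (∫⁻ z in s, gaussianPDF 0 b (z - x)) ∂(gaussianReal 0 a) :=
        lintegral_congr hre
    _ = ∫⁻ x, gaussianPDF 0 a x * ∫⁻ z in s, gaussianPDF 0 b (z - x) := by
        rw [gaussianReal_of_var_ne_zero 0 ha,
          lintegral_withDensity_eq_lintegral_mul _ (measurable_gaussianPDF 0 a)
            (by
              apply Measurable.lintegral_prod_right (f := fun x z => gaussianPDF 0 b (z - x))
              exact (measurable_gaussianPDF 0 b).comp (by fun_prop))]
        rfl
    _ = ∫⁻ x, ∫⁻ z in s, gaussianPDF 0 a x * gaussianPDF 0 b (z - x) := by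
        refine lintegral_congr fun x => ?_
        exact (lintegral_const_mul (gaussianPDF 0 a x)
          (f := fun z => gaussianPDF 0 b (z - x))
          ((measurable_gaussianPDF 0 b).comp (by fun_prop))).symm
    _ = ∫⁻ z in s, ∫⁻ x, gaussianPDF 0 a x * gaussianPDF 0 b (z - x) := by
        rw [lintegral_lintegral_swap]
        apply Measurable.aemeasurable
        change Measurable ((fun p : ℝ × ℝ => gaussianPDF 0 a p.1) * (fun p : ℝ × ℝ => gaussianPDF 0 b (p.2 - p.1)))
        apply Measurable.mul
        · exact (measurable_gaussianPDF 0 a).comp measurable_fst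
        · exact (measurable_gaussianPDF 0 b).comp (by fun_prop)
    _ = ∫⁻ z in s, gaussianPDF 0 (a + b) z :=
        lintegral_congr fun z => lintegral_pdf_conv a b ha hb z
    _ = gaussianReal 0 (a + b) s := by
        rw [gaussianReal_of_var_ne_zero 0 hab, withDensity_apply _ hs]

instance (n : ℕ) : IsProbabilityMeasure (stdGaussian n) := by
  unfold _root_.stdGaussian; infer_instance

lemma measurable_dot {m : ℕ} (w : Fin m → ℝ) : Measurable fun x : Fin m → ℝ => w ⬝ᵥ x := by
  unfold dotProduct
  exact Finset.measurable_sum _ (fun i _ => by fun_prop)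

lemma stdGaussian_map_dot (n : ℕ) (w : Fin n → ℝ) :
    Measure.map (fun x => w ⬝ᵥ x) (stdGaussian n) =
      gaussianReal 0 (∑ i, (⟨w i ^ 2, sq_nonneg _⟩ : ℝ≥0)) := by
  induction n with
  | zero =>
      have h0 : (fun x : Fin 0 → ℝ => w ⬝ᵥ x) = fun _ => (0:ℝ) := by
        funext x; simp [dotProduct]
      rw [h0]
      rw [Measure.map_const]
      simp only [measure_univ, one_smul]
      simp only [Finset.univ_eq_empty, Finset.sum_empty]
      exact (gaussianReal_zero_var 0).symm
  | succ n ih =>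
      have hp := measurePreserving_piFinSuccAbove (fun _ : Fin (n+1) => gaussianReal 0 1) 0
      set e := MeasurableEquiv.piFinSuccAbove (fun _ : Fin (n+1) => ℝ) 0 with he
      have hstd : stdGaussian (n+1) =
          Measure.map e.symm ((gaussianReal 0 1).prod (stdGaussian n)) := by
        unfold _root_.stdGaussian
        exact (hp.symm).map_eq.symm
      rw [hstd, Measure.map_map (measurable_dot w) e.symm.measurable]
      have hcomp : ((fun x => w ⬝ᵥ x) ∘ e.symm) =
          fun p : ℝ × (Fin n → ℝ) => (w 0 * p.1) + (fun j => w j.succ) ⬝ᵥ p.2 := by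
        funext p
        simp only [Function.comp_apply]
        have h1 : (e.symm p : Fin (n+1) → ℝ) = Fin.insertNth 0 p.1 p.2 := rfl
        rw [h1, Fin.insertNth_zero, dotProduct, Fin.sum_univ_succ]
        simp [dotProduct]
      rw [hcomp]
      have hsplit : (fun p : ℝ × (Fin n → ℝ) => (w 0 * p.1) + (fun j => w j.succ) ⬝ᵥ p.2) =
          (fun q : ℝ × ℝ => q.1 + q.2) ∘
            (Prod.map (fun t => w 0 * t) (fun x => (fun j => w j.succ) ⬝ᵥ x)) := by
        funext p; rfl
      rw [hsplit, ← Measure.map_map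
        (show Measurable fun q : ℝ × ℝ => q.1 + q.2 by fun_prop)
        (show Measurable (Prod.map (fun t : ℝ => w 0 * t) fun x => (fun j : Fin n => w j.succ) ⬝ᵥ x) from
          Measurable.prodMap (by fun_prop) (measurable_dot _))]
      rw [← Measure.map_prod_map _ _
        (show Measurable fun t : ℝ => w 0 * t by fun_prop) (measurable_dot _)]
      rw [gaussianReal_map_const_mul (w 0), ih]
      simp only [mul_zero, mul_one]
      rw [gaussian_conv]
      congr 1
      exact (Fin.sum_univ_succ (M := ℝ≥0) (fun i => (⟨w i ^ 2, sq_nonneg _⟩ : ℝ≥0))).symm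

section Mat
variable {n : ℕ} {Sig sqrtSig : Matrix (Fin n) (Fin n) ℝ} {lam₁ : ℝ} {v₁ : Fin n → ℝ}

lemma rayleigh (hSig : Sig.PosDef)
    (hmax : ∀ (μ : ℝ) (v : Fin n → ℝ), v ≠ 0 → Sig.mulVec v = μ • v → μ ≤ lam₁)
    (v : Fin n → ℝ) : v ⬝ᵥ Sig.mulVec v ≤ lam₁ * (v ⬝ᵥ v) := by
  have hH : Sig.IsHermitian := hSig.1
  have heigle : ∀ i, hH.eigenvalues i ≤ lam₁ := by
    intro i
    refine hmax _ _ ?_ (hH.mulVec_eigenvectorBasis i)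
    intro h0
    have h1 : ‖hH.eigenvectorBasis i‖ = 1 := hH.eigenvectorBasis.orthonormal.1 i
    have : (hH.eigenvectorBasis i : EuclideanSpace ℝ (Fin n)) = 0 := by
      ext j; exact congrFun h0 j
    rw [this, norm_zero] at h1; norm_num at h1
  set W : Matrix (Fin n) (Fin n) ℝ := lam₁ • (1 : Matrix (Fin n) (Fin n) ℝ) - Sig with hW
  have hWpsd : W.PosSemidef := by
    have hU := hH.spectral_theorem
    rw [Unitary.conjStarAlgAut_apply] at hU
    have h1 : lam₁ • (1 : Matrix (Fin n) (Fin n) ℝ) =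
        (hH.eigenvectorUnitary : Matrix (Fin n) (Fin n) ℝ) *
          (lam₁ • (1 : Matrix (Fin n) (Fin n) ℝ)) *
          (star (hH.eigenvectorUnitary : Matrix (Fin n) (Fin n) ℝ)) := by
      rw [Matrix.mul_smul, Matrix.mul_one, Matrix.smul_mul,
        (Matrix.mem_unitaryGroup_iff).mp hH.eigenvectorUnitary.2]
    have hdiag : W = (hH.eigenvectorUnitary : Matrix (Fin n) (Fin n) ℝ) *
        (diagonal (fun i => lam₁ - hH.eigenvalues i)) *
        (star (hH.eigenvectorUnitary : Matrix (Fin n) (Fin n) ℝ)) := by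
      rw [hW]
      conv_lhs => rw [hU]
      conv_lhs => rw [h1]
      rw [← Matrix.sub_mul, ← Matrix.mul_sub]
      congr 2
      rw [Matrix.smul_one_eq_diagonal, ← Matrix.diagonal_sub]
      congr 1
    rw [hdiag]
    have hd : (diagonal (fun i => lam₁ - hH.eigenvalues i)).PosSemidef :=
      posSemidef_diagonal_iff.mpr fun i => sub_nonneg.mpr (heigle i)
    exact hd.mul_mul_conjTranspose_same _
  have h2 := hWpsd.dotProduct_mulVec_nonneg v
  have h3 : star v = v := by simp
  rw [h3, hW, Matrix.sub_mulVec, Matrix.smul_mulVec, Matrix.one_mulVec,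
    dotProduct_sub, dotProduct_smul] at h2
  simp only [smul_eq_mul] at h2
  linarith

lemma lam_pos (hSig : Sig.PosDef) (hne : v₁ ≠ 0) (heig : Sig.mulVec v₁ = lam₁ • v₁) :
    0 < lam₁ := by
  have h1 : 0 < v₁ ⬝ᵥ Sig.mulVec v₁ := by
    have := hSig.dotProduct_mulVec_pos hne
    simpa using this
  rw [heig, dotProduct_smul, smul_eq_mul] at h1
  have h2 : 0 < v₁ ⬝ᵥ v₁ := by
    rw [dot_self_eq]
    rcases Function.ne_iff.1 hne with ⟨i, hi⟩
    calc (0:ℝ) < v₁ i ^ 2 := by have : v₁ i ≠ 0 := hi; positivity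
    _ ≤ _ := Finset.single_le_sum (f := fun i => v₁ i ^2) (fun j _ => sq_nonneg _)
        (Finset.mem_univ i)
  nlinarith

lemma sqrt_eigvec (hsqrtPD : sqrtSig.PosDef) (hsqrt : sqrtSig * sqrtSig = Sig)
    (heig : Sig.mulVec v₁ = lam₁ • v₁) (hlam : 0 < lam₁) :
    sqrtSig.mulVec v₁ = Real.sqrt lam₁ • v₁ := by
  set u : Fin n → ℝ := sqrtSig.mulVec v₁ - Real.sqrt lam₁ • v₁ with hu
  have hSu : sqrtSig.mulVec u = (-Real.sqrt lam₁) • u := by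
    rw [hu, Matrix.mulVec_sub, Matrix.mulVec_smul]
    rw [show sqrtSig.mulVec (sqrtSig.mulVec v₁) = Sig.mulVec v₁ by
      rw [Matrix.mulVec_mulVec, hsqrt], heig]
    have hss : Real.sqrt lam₁ * Real.sqrt lam₁ = lam₁ := Real.mul_self_sqrt hlam.le
    ext i
    simp only [Pi.sub_apply, Pi.smul_apply, smul_eq_mul, neg_mul]
    linear_combination (-v₁ i) * hss
  by_cases hu0 : u = 0
  · have := hu ▸ hu0
    have h2 : sqrtSig.mulVec v₁ - Real.sqrt lam₁ • v₁ = 0 := this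
    funext i
    have := congrFun h2 i
    simp only [Pi.sub_apply, Pi.zero_apply, sub_eq_zero] at this
    exact this
  · exfalso
    have h1 : 0 < u ⬝ᵥ sqrtSig.mulVec u := by
      have := hsqrtPD.dotProduct_mulVec_pos hu0
      simpa using this
    rw [hSu, dotProduct_smul, smul_eq_mul] at h1
    have h2 : 0 < u ⬝ᵥ u := by
      rw [dot_self_eq]
      rcases Function.ne_iff.1 hu0 with ⟨i, hi⟩
      calc (0:ℝ) < u i ^ 2 := by have : u i ≠ 0 := hi; positivity
      _ ≤ _ := Finset.single_le_sum (f := fun i => u i ^2) (fun j _ => sq_nonneg _)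
          (Finset.mem_univ i)
    have hs : 0 < Real.sqrt lam₁ := Real.sqrt_pos.2 hlam
    nlinarith
end Mat

section Mat2
variable {n : ℕ} {Sig sqrtSig : Matrix (Fin n) (Fin n) ℝ} {lam₁ : ℝ} {v₁ : Fin n → ℝ}

lemma lpNorm_mulVec_le (hSig : Sig.PosDef) (hsqrtPD : sqrtSig.PosDef)
    (hsqrt : sqrtSig * sqrtSig = Sig)
    (hmax : ∀ (μ : ℝ) (v : Fin n → ℝ), v ≠ 0 → Sig.mulVec v = μ • v → μ ≤ lam₁)
    (hlam : 0 < lam₁) (v : Fin n → ℝ) :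
    lpNorm 2 (sqrtSig.mulVec v) ≤ Real.sqrt lam₁ * lpNorm 2 v := by
  have key : v ⬝ᵥ Sig.mulVec v = (sqrtSig.mulVec v) ⬝ᵥ (sqrtSig.mulVec v) := by
    conv_lhs => rw [← hsqrt, ← Matrix.mulVec_mulVec]
    rw [Matrix.dotProduct_mulVec]
    congr 1
    have hsym : sqrtSigᵀ = sqrtSig := by
      rw [← Matrix.conjTranspose_eq_transpose_of_trivial]; exact hsqrtPD.1
    conv_lhs => rw [← hsym]
    rw [Matrix.vecMul_transpose]
  rw [lpNorm_two, lpNorm_two, ← dot_self_eq, ← dot_self_eq, ← key]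
  calc Real.sqrt (v ⬝ᵥ Sig.mulVec v) ≤ Real.sqrt (lam₁ * (v ⬝ᵥ v)) :=
        Real.sqrt_le_sqrt (rayleigh hSig hmax v)
    _ = Real.sqrt lam₁ * Real.sqrt (v ⬝ᵥ v) := Real.sqrt_mul hlam.le _

lemma matLpNorm_eq (hSig : Sig.PosDef) (hsqrtPD : sqrtSig.PosDef)
    (hsqrt : sqrtSig * sqrtSig = Sig)
    (hmax : ∀ (μ : ℝ) (v : Fin n → ℝ), v ≠ 0 → Sig.mulVec v = μ • v → μ ≤ lam₁)
    (hv₁ : lpNorm 2 v₁ = 1) (heig : Sig.mulVec v₁ = lam₁ • v₁) :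
    matLpNorm 2 sqrtSig = Real.sqrt lam₁ := by
  have hne : v₁ ≠ 0 := by
    intro h
    rw [h, lpNorm_two] at hv₁
    simp at hv₁
  have hlam : 0 < lam₁ := lam_pos hSig hne heig
  have hsq : 0 ≤ Real.sqrt lam₁ := Real.sqrt_nonneg _
  have hblock : ∀ v : Fin n → ℝ,
      (⨆ _ : v ∈ {v : Fin n → ℝ | v ≠ 0}, lpNorm 2 (sqrtSig.mulVec v) / lpNorm 2 v)
        ≤ Real.sqrt lam₁ := by
    intro v
    refine Real.iSup_le (fun hv => ?_) hsq
    rw [div_le_iff₀ (lpNorm_pos hv)]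
    exact lpNorm_mulVec_le hSig hsqrtPD hsqrt hmax hlam v
  unfold matLpNorm
  refine le_antisymm (Real.iSup_le hblock hsq) ?_
  have hb : BddAbove (Set.range fun v : Fin n → ℝ =>
      ⨆ _ : v ∈ {v : Fin n → ℝ | v ≠ 0}, lpNorm 2 (sqrtSig.mulVec v) / lpNorm 2 v) := by
    refine ⟨Real.sqrt lam₁, ?_⟩
    rintro _ ⟨v, rfl⟩
    exact hblock v
  have heq : (⨆ _ : v₁ ∈ {v : Fin n → ℝ | v ≠ 0},
      lpNorm 2 (sqrtSig.mulVec v₁) / lpNorm 2 v₁) = Real.sqrt lam₁ := by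
    rw [ciSup_pos (show v₁ ∈ {v : Fin n → ℝ | v ≠ 0} from hne)]
    rw [sqrt_eigvec hsqrtPD hsqrt heig hlam, lpNorm_smul, hv₁]
    simp [abs_of_nonneg hsq]
  calc Real.sqrt lam₁ = _ := heq.symm
    _ ≤ _ := le_ciSup hb v₁
end Mat2

lemma Phi_eq_integral (t : ℝ) : Phi t = ∫ x in Set.Iic t, gaussianPDFReal 0 1 x := by
  unfold Phi
  rw [gaussianReal_apply_eq_integral 0 one_ne_zero (Set.Iic t)]
  rw [ENNReal.toReal_ofReal]
  exact setIntegral_nonneg measurableSet_Iic fun x _ => gaussianPDFReal_nonneg 0 1 x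

lemma Phi_strictMono : StrictMono Phi := by
  intro s t hst
  rw [Phi_eq_integral, Phi_eq_integral]
  have hsplit : Set.Iic t = Set.Iic s ∪ Set.Ioc s t := by
    rw [Set.Iic_union_Ioc_eq_Iic hst.le]
  rw [hsplit, setIntegral_union (Set.Iic_disjoint_Ioc le_rfl) measurableSet_Ioc
    ((integrable_gaussianPDFReal 0 1).integrableOn) ((integrable_gaussianPDFReal 0 1).integrableOn)]
  have hpos : 0 < ∫ x in Set.Ioc s t, gaussianPDFReal 0 1 x := by
    rw [← intervalIntegral.integral_of_le hst.le]
    apply intervalIntegral.intervalIntegral_pos_of_pos_on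
    · exact (integrable_gaussianPDFReal 0 1).intervalIntegrable
    · exact fun x _ => gaussianPDFReal_pos 0 1 x one_ne_zero
    · exact hst
  linarith

lemma PhiInv_Phi (t : ℝ) : PhiInv (Phi t) = t :=
  Function.leftInverse_invFun Phi_strictMono.injective t

/-- For `ν = N(θ, Sig)` and the half space `E = {x : v₁ᵀx + b ≤ 0}` with `v₁`
a unit eigenvector for the largest eigenvalue of `Sig`, the generalized
Gaussian isoperimetric lower bound for `p = 2` is attained with equality. -/
theorem general_isoperimetry_tight {n : ℕ}
    (Sig sqrtSig : Matrix (Fin n) (Fin n) ℝ)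
    (hSig : Sig.PosDef) (hsqrt : sqrtSig * sqrtSig = Sig) (hsqrtPD : sqrtSig.PosDef)
    (θ : Fin n → ℝ) (ν : Measure (Fin n → ℝ))
    (hν : ν = Measure.map (fun x => θ + sqrtSig.mulVec x) (stdGaussian n))
    (lam₁ : ℝ) (v₁ : Fin n → ℝ) (hv₁ : lpNorm 2 v₁ = 1)
    (heig : Sig.mulVec v₁ = lam₁ • v₁)
    (hmax : ∀ (μ : ℝ) (v : Fin n → ℝ), v ≠ 0 → Sig.mulVec v = μ • v → μ ≤ lam₁)
    (b : ℝ) (ε : ℝ) (hε : 0 ≤ ε) :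
    (ν (expand 2 ε {x : Fin n → ℝ | v₁ ⬝ᵥ x + b ≤ 0})).toReal =
      Phi (PhiInv ((ν {x : Fin n → ℝ | v₁ ⬝ᵥ x + b ≤ 0}).toReal) +
        ε / matLpNorm 2 sqrtSig) := by
  have hne : v₁ ≠ 0 := by
    intro h
    rw [h, lpNorm_two] at hv₁
    simp at hv₁
  have hlam : 0 < lam₁ := lam_pos hSig hne heig
  set s := Real.sqrt lam₁ with hsdef
  have hs : 0 < s := Real.sqrt_pos.2 hlam
  set m := v₁ ⬝ᵥ θ + b with hm
  have hmeas_aff : Measurable fun x : Fin n → ℝ => θ + sqrtSig.mulVec x := by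
    apply Measurable.add measurable_const
    exact measurable_pi_lambda _ fun i => measurable_dot (sqrtSig i)
  have hsym : sqrtSigᵀ = sqrtSig := by
    rw [← Matrix.conjTranspose_eq_transpose_of_trivial]; exact hsqrtPD.1
  have key : ∀ δ : ℝ, ν {x : Fin n → ℝ | v₁ ⬝ᵥ x + b ≤ δ} =
      gaussianReal 0 1 (Set.Iic ((δ - m) / s)) := by
    intro δ
    have hmset : MeasurableSet {x : Fin n → ℝ | v₁ ⬝ᵥ x + b ≤ δ} :=
      measurableSet_le ((measurable_dot v₁).add_const b) measurable_const
    rw [hν, Measure.map_apply hmeas_aff hmset]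
    have hset : ((fun x : Fin n → ℝ => θ + sqrtSig.mulVec x) ⁻¹'
        {x : Fin n → ℝ | v₁ ⬝ᵥ x + b ≤ δ}) =
        (fun x : Fin n → ℝ => v₁ ⬝ᵥ x) ⁻¹' Set.Iic ((δ - m) / s) := by
      ext x
      simp only [Set.mem_preimage, Set.mem_setOf_eq, Set.mem_Iic]
      have hdot : v₁ ⬝ᵥ (θ + sqrtSig.mulVec x) = m - b + s * (v₁ ⬝ᵥ x) := by
        rw [dotProduct_add]
        have h1 : v₁ ⬝ᵥ sqrtSig.mulVec x = (sqrtSig.mulVec v₁) ⬝ᵥ x := by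
          rw [Matrix.dotProduct_mulVec]
          congr 1
          conv_lhs => rw [← hsym]
          rw [Matrix.vecMul_transpose]
        rw [h1, sqrt_eigvec hsqrtPD hsqrt heig hlam, smul_dotProduct, smul_eq_mul, hm]
        ring
      rw [hdot]
      rw [le_div_iff₀ hs]
      constructor <;> intro h <;> nlinarith
    rw [hset, ← Measure.map_apply (measurable_dot v₁) measurableSet_Iic,
      stdGaussian_map_dot]
    have hvar : (∑ i, (⟨v₁ i ^ 2, sq_nonneg _⟩ : ℝ≥0)) = 1 := by
      apply NNReal.coe_injective
      refine (NNReal.coe_sum ..).trans ?_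
      change ∑ i, v₁ i ^ 2 = 1
      exact sum_sq_eq_one hv₁
    exact congrArg (fun v : ℝ≥0 => gaussianReal 0 v (Set.Iic ((δ - m) / s))) hvar
  rw [expand_halfspace v₁ hv₁ b ε hε, key ε, key 0]
  have h1 : ((gaussianReal 0 1) (Set.Iic ((0 - m) / s))).toReal = Phi ((0 - m) / s) := rfl
  rw [h1, PhiInv_Phi, matLpNorm_eq hSig hsqrtPD hsqrt hmax hv₁ heig, ← hsdef]
  have h2 : (0 - m) / s + ε / s = (ε - m) / s := by ring
  rw [h2]
  rfl
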